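/- A dynamic envy-free and weakly non-wasteful mechanism always exists (witnessed by Home Penalized Deferred Acceptance), for any finite horizon, any arrival sequences of children and homes, any strict cardinal utilities, and any positive waiting costs. -/

import Mathlib

/-- A one-to-one (partial) matching between children and homes. -/
structure Matching (C H : Type) where
  toHome : C → Option H
  toChild : H → Option C
  consistent : ∀ c h, toHome c = some h ↔ toChild h = some c

/-- A dynamic matching market: cardinal utilities, arrival times, waiting costs. -/
structure Market (C H : Type) where
  U : C → H → ℝ
  V : H → C → ℝ
  arrC : C → ℕ
  arrH : H → ℕ
  wC : ℝ
  wH : ℝ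

/-- Accept/reject action profiles of homes over time. -/
abbrev Actions (H : Type) := H → ℕ → Bool

/-- A dynamic mechanism: given the homes' action profile, a matching in each period. -/
abbrev Mechanism (C H : Type) := Actions H → ℕ → Matching C H

open scoped Classical in
/-- The counterfactual profile in which home `h` rejects every placement before `t'`,
accepts at `t'`, and otherwise plays as in `a`; all other homes play as in `a`. -/
noncomputable def cfProfile {H : Type} (a : Actions H) (h : H) (t' : ℕ) : Actions H :=
  fun h' k =>
    if h' = h then (if k < t' then false else if k = t' then true else a h' k)
    else a h' k

namespace Market

variable {C H : Type}

/-- Time-discounted utility of home `h` for child `c` at time `t`: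
`V_h^t(c) = V_h(c) - (t - arrival(h)) * w_H`. -/
noncomputable def Vt (M : Market C H) (h : H) (c : C) (t : ℕ) : ℝ :=
  M.V h c - ((t : ℝ) - (M.arrH h : ℝ)) * M.wH

/-- Child `c` is active (present in the market) at time `t`:
she has arrived and no home has yet accepted a placement with her. -/
def activeC (M : Market C H) (Q : Mechanism C H) (a : Actions H) (c : C) (t : ℕ) : Prop :=
  M.arrC c ≤ t ∧ ¬ ∃ k < t, ∃ h, (Q a k).toHome c = some h ∧ a h k = true

/-- Home `h` is active (present in the market) at time `t`:
it has arrived and has not yet accepted a placement. -/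
def activeH (M : Market C H) (Q : Mechanism C H) (a : Actions H) (h : H) (t : ℕ) : Prop :=
  M.arrH h ≤ t ∧ ¬ ∃ k < t, (Q a k).toChild h ≠ none ∧ a h k = true

/-- Admissibility: the mechanism only matches agents active in the current market. -/
def feasible (M : Market C H) (Q : Mechanism C H) : Prop :=
  ∀ a t c h, (Q a t).toHome c = some h → M.activeC Q a c t ∧ M.activeH Q a h t

/-- Child `c` has been adopted (placement accepted) by time `t`. -/
def childAdopted (M : Market C H) (Q : Mechanism C H) (a : Actions H) (c : C) (t : ℕ) : Prop :=
  ∃ k ≤ t, ∃ h, (Q a k).toHome c = some h ∧ a h k = true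

/-- Home `h` has accepted a placement by time `t`. -/
def homeAccepted (M : Market C H) (Q : Mechanism C H) (a : Actions H) (h : H) (t : ℕ) : Prop :=
  ∃ k ≤ t, (Q a k).toChild h ≠ none ∧ a h k = true

/-- Justified envy-freeness at every period and action profile: no mutually matched
child and home both strictly prefer each other to their assigned partners. -/
def justifiedEnvyFree (M : Market C H) (Q : Mechanism C H) : Prop :=
  ∀ a t c h h' c', (Q a t).toHome c = some h' → (Q a t).toChild h = some c' →
    ¬ (M.U c h' < M.U c h ∧ M.V h c' < M.V h c)

/-- Individual rationality at every period and action profile. -/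
def individuallyRational (M : Market C H) (Q : Mechanism C H) : Prop :=
  ∀ a t c h, (Q a t).toHome c = some h → 0 ≤ M.U c h ∧ 0 ≤ M.V h c

/-- Patience-freeness: any placement offered at `t` is weakly better (time-discounted)
than the placement the home would receive at any later `t'` in the counterfactual in
which it rejects all placements before `t'` and accepts at `t'`. -/
noncomputable def patienceFree (M : Market C H) (Q : Mechanism C H) : Prop :=
  ∀ (a : Actions H) (t : ℕ) (h : H) (c : C), (Q a t).toChild h = some c →
    ∀ t' > t, ∀ c', (Q (cfProfile a h t') t').toChild h = some c' →
      M.Vt h c' t' ≤ M.Vt h c t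

/-- Dynamic envy-freeness: justified envy-free, patience-free, individually rational. -/
noncomputable def dynamicEnvyFree (M : Market C H) (Q : Mechanism C H) : Prop :=
  M.justifiedEnvyFree Q ∧ M.patienceFree Q ∧ M.individuallyRational Q

/-- Strict non-wastefulness: after every history and action profile there is never an
active unmatched child and an active unmatched home that find each other acceptable. -/
def strictlyNonWasteful (M : Market C H) (Q : Mechanism C H) : Prop :=
  ∀ a t, ¬ ∃ c h, M.activeC Q a c t ∧ M.activeH Q a h t ∧
    0 ≤ M.U c h ∧ 0 ≤ M.V h c ∧ (Q a t).toHome c = none ∧ (Q a t).toChild h = none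

/-- Weak non-wastefulness: when every home accepts every offered placement,
no mutually acceptable unmatched pair ever remains. -/
def weaklyNonWasteful (M : Market C H) (Q : Mechanism C H) : Prop :=
  ∀ t, ¬ ∃ c h, M.activeC Q (fun _ _ => true) c t ∧ M.activeH Q (fun _ _ => true) h t ∧
    0 ≤ M.U c h ∧ 0 ≤ M.V h c ∧
    (Q (fun _ _ => true) t).toHome c = none ∧ (Q (fun _ _ => true) t).toChild h = none

/-- The mechanism is a deterministic function of the history of markets (active sets)
and past matchings. -/
def historyDetermined (M : Market C H) (Q : Mechanism C H) : Prop :=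
  ∀ a a' t,
    (∀ k ≤ t, ∀ c, M.activeC Q a c k ↔ M.activeC Q a' c k) →
    (∀ k ≤ t, ∀ h, M.activeH Q a h k ↔ M.activeH Q a' h k) →
    (∀ k < t, Q a k = Q a' k) →
    Q a t = Q a' t

/-- `x` is the realized (true-utility, time-discounted) payoff of home `h`:
the time-discounted utility of an accepted placement, or `0` if `h` never accepts. -/
noncomputable def payoffIs (M : Market C H) (Q : Mechanism C H) (a : Actions H)
    (h : H) (x : ℝ) : Prop :=
  (∃ t c, (Q a t).toChild h = some c ∧ a h t = true ∧ x = M.Vt h c t) ∨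
  ((∀ t c, (Q a t).toChild h = some c → a h t = false) ∧ x = 0)

end Market
namespace HPDA

open scoped Classical
open Finset

noncomputable def argmaxOpt {α : Type} (s : Finset α) (f : α → ℝ) : Option α :=
  if hs : s.Nonempty then some (Finset.exists_max_image s f hs).choose else none

theorem argmaxOpt_spec {α : Type} {s : Finset α} {f : α → ℝ} {a : α}
    (h : argmaxOpt s f = some a) : a ∈ s ∧ ∀ b ∈ s, f b ≤ f a := by
  unfold argmaxOpt at h
  split at h
  · obtain ⟨h1, h2⟩ := (Finset.exists_max_image s f ‹_›).choose_spec
    cases h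
    exact ⟨h1, h2⟩
  · exact absurd h (by simp)

theorem argmaxOpt_of_mem {α : Type} {s : Finset α} {f : α → ℝ} {a : α}
    (h : a ∈ s) : ∃ b, argmaxOpt s f = some b ∧ b ∈ s ∧ ∀ b' ∈ s, f b' ≤ f b := by
  have hs : s.Nonempty := ⟨a, h⟩
  refine ⟨_, by rw [argmaxOpt, dif_pos hs], argmaxOpt_spec (by rw [argmaxOpt, dif_pos hs])⟩

section Static

variable {C H : Type} [Fintype C] [Fintype H]
variable (CC : C → Prop) (HH : H → Prop) (U : C → H → ℝ) (V : H → C → ℝ)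

/-- eligibility of a pair -/
def elig (c : C) (h : H) : Prop := CC c ∧ HH h ∧ 0 ≤ U c h ∧ 0 ≤ V h c

noncomputable def cand (R : H → Finset C) (h : H) : Finset C :=
  univ.filter fun c => elig CC HH U V c h ∧ c ∉ R h

noncomputable def prp (R : H → Finset C) (h : H) : Option C :=
  argmaxOpt (cand CC HH U V R h) (V h)

noncomputable def props (R : H → Finset C) (c : C) : Finset H :=
  univ.filter fun h => prp CC HH U V R h = some c

noncomputable def hld (R : H → Finset C) (c : C) : Option H :=
  argmaxOpt (props CC HH U V R c) (U c)

noncomputable def step (R : H → Finset C) : H → Finset C := fun h =>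
  R h ∪ univ.filter fun c => prp CC HH U V R h = some c ∧ hld CC HH U V R c ≠ some h

variable {CC HH U V}

theorem prp_mem {R : H → Finset C} {h : H} {c : C} (hp : prp CC HH U V R h = some c) :
    elig CC HH U V c h ∧ c ∉ R h ∧ ∀ c', elig CC HH U V c' h → c' ∉ R h → V h c' ≤ V h c := by
  obtain ⟨h1, h2⟩ := argmaxOpt_spec hp
  simp only [cand, mem_filter, mem_univ, true_and] at h1 h2
  exact ⟨h1.1, h1.2, fun c' he hn => h2 c' ⟨he, hn⟩⟩

theorem hld_mem {R : H → Finset C} {c : C} {h : H} (hh : hld CC HH U V R c = some h) :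
    prp CC HH U V R h = some c ∧ ∀ h', prp CC HH U V R h' = some c → U c h' ≤ U c h := by
  obtain ⟨h1, h2⟩ := argmaxOpt_spec hh
  simp only [props, mem_filter, mem_univ, true_and] at h1 h2
  exact ⟨h1, fun h' hp => h2 h' hp⟩

theorem mem_step_iff {R : H → Finset C} {h : H} {c : C} :
    c ∈ step CC HH U V R h ↔
      c ∈ R h ∨ (prp CC HH U V R h = some c ∧ hld CC HH U V R c ≠ some h) := by
  simp [step]

theorem subset_step {R : H → Finset C} (h : H) : R h ⊆ step CC HH U V R h :=
  Finset.subset_union_left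

theorem step_eq_of_hld {R : H → Finset C} {c : C} {h : H}
    (hh : hld CC HH U V R c = some h) : step CC HH U V R h = R h := by
  ext c'
  rw [mem_step_iff]
  constructor
  · rintro (hc | ⟨hp, hne⟩)
    · exact hc
    · have : c' = c := by
        have := (hld_mem hh).1
        rw [hp] at this; exact (Option.some.inj this)
      subst this
      exact absurd hh hne
  · exact Or.inl

theorem prp_step_of_hld {R : H → Finset C} {c : C} {h : H}
    (hh : hld CC HH U V R c = some h) : prp CC HH U V (step CC HH U V R) h = some c := by
  have he : step CC HH U V R h = R h := step_eq_of_hld hh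
  have : cand CC HH U V (step CC HH U V R) h = cand CC HH U V R h := by
    unfold cand; rw [he]
  rw [prp, this, ← prp]
  exact (hld_mem hh).1

theorem hld_step_mono {R : H → Finset C} {c : C} {h : H}
    (hh : hld CC HH U V R c = some h) :
    ∃ h₃, hld CC HH U V (step CC HH U V R) c = some h₃ ∧ U c h ≤ U c h₃ := by
  have hp := prp_step_of_hld hh
  have hmem : h ∈ props CC HH U V (step CC HH U V R) c := by
    simp only [props, mem_filter, mem_univ, true_and]; exact hp
  obtain ⟨b, hb, hbmem, hbmax⟩ := argmaxOpt_of_mem (f := U c) hmem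
  exact ⟨b, hb, hbmax h hmem⟩

def Inv (R : H → Finset C) : Prop :=
  ∀ h c, c ∈ R h → ∃ h', hld CC HH U V R c = some h' ∧ U c h ≤ U c h'

theorem Inv_step {R : H → Finset C} (hI : Inv (CC := CC) (HH := HH) (U := U) (V := V) R) :
    Inv (CC := CC) (HH := HH) (U := U) (V := V) (step CC HH U V R) := by
  intro h c hc
  rcases mem_step_iff.mp hc with hc | ⟨hp, hne⟩
  · obtain ⟨h', hh', hle⟩ := hI h c hc
    obtain ⟨h₃, h3, le3⟩ := hld_step_mono hh'
    exact ⟨h₃, h3, hle.trans le3⟩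
  · have hmem : h ∈ props CC HH U V R c := by
      simp only [props, mem_filter, mem_univ, true_and]; exact hp
    obtain ⟨b, hb, hbmem, hbmax⟩ := argmaxOpt_of_mem (f := U c) hmem
    obtain ⟨h₃, h3, le3⟩ := hld_step_mono hb
    exact ⟨h₃, h3, (hbmax h hmem).trans le3⟩

theorem exists_fix :
    ∃ R, step CC HH U V R = R ∧ Inv (CC := CC) (HH := HH) (U := U) (V := V) R := by
  by_contra hcon
  push_neg at hcon
  set R0 : H → Finset C := fun _ => ∅ with hR0
  have hInv : ∀ n, Inv (CC := CC) (HH := HH) (U := U) (V := V) ((step CC HH U V)^[n] R0) := by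
    intro n
    induction n with
    | zero => intro h c hc; simp [R0] at hc
    | succ n ih => rw [Function.iterate_succ_apply']; exact Inv_step ih
  have hne : ∀ n, step CC HH U V ((step CC HH U V)^[n] R0) ≠ (step CC HH U V)^[n] R0 :=
    fun n h => hcon _ h (hInv n)
  have key : ∀ n, n ≤ ∑ h : H, (((step CC HH U V)^[n] R0) h).card := by
    intro n
    induction n with
    | zero => exact Nat.zero_le _
    | succ n ih =>
      have hlt : ∑ h : H, (((step CC HH U V)^[n] R0) h).card
          < ∑ h : H, ((step CC HH U V ((step CC HH U V)^[n] R0)) h).card := by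
        refine Finset.sum_lt_sum (fun h _ => Finset.card_le_card (subset_step h)) ?_
        have : ∃ h, step CC HH U V ((step CC HH U V)^[n] R0) h ≠ ((step CC HH U V)^[n] R0) h := by
          by_contra hall
          push_neg at hall
          exact hne n (funext hall)
        obtain ⟨h, hh⟩ := this
        exact ⟨h, Finset.mem_univ h,
          Finset.card_lt_card (lt_of_le_of_ne (subset_step h) (Ne.symm hh))⟩
      rw [Function.iterate_succ_apply']
      omega
  have hb : ∀ n, ∑ h : H, (((step CC HH U V)^[n] R0) h).card ≤ Fintype.card H * Fintype.card C := by
    intro n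
    calc ∑ h : H, (((step CC HH U V)^[n] R0) h).card
        ≤ ∑ _h : H, Fintype.card C := Finset.sum_le_sum fun h _ => Finset.card_le_univ _
      _ = Fintype.card H * Fintype.card C := by simp [Finset.sum_const, mul_comm]
  have := key (Fintype.card H * Fintype.card C + 1)
  have := hb (Fintype.card H * Fintype.card C + 1)
  omega

variable (CC HH U V)

noncomputable def Rstar : H → Finset C := (exists_fix (CC := CC) (HH := HH) (U := U) (V := V)).choose

theorem Rstar_fix : step CC HH U V (Rstar CC HH U V) = Rstar CC HH U V :=
  (exists_fix).choose_spec.1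

theorem Rstar_inv : Inv (CC := CC) (HH := HH) (U := U) (V := V) (Rstar CC HH U V) :=
  (exists_fix).choose_spec.2

variable {CC HH U V}

theorem fix_hld {h : H} {c : C} (hp : prp CC HH U V (Rstar CC HH U V) h = some c) :
    hld CC HH U V (Rstar CC HH U V) c = some h := by
  by_contra hne
  have : c ∈ step CC HH U V (Rstar CC HH U V) h := mem_step_iff.mpr (Or.inr ⟨hp, hne⟩)
  rw [Rstar_fix] at this
  exact (prp_mem hp).2.1 this

variable (CC HH U V)

noncomputable def stableMatch : Matching C H where
  toHome c := hld CC HH U V (Rstar CC HH U V) c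
  toChild h := prp CC HH U V (Rstar CC HH U V) h
  consistent c h := ⟨fun hc => (hld_mem hc).1, fun hp => fix_hld hp⟩

variable {CC HH U V}

theorem stableMatch_IR {c : C} {h : H}
    (hm : (stableMatch CC HH U V).toChild h = some c) : elig CC HH U V c h :=
  (prp_mem hm).1

theorem stableMatch_stable {c : C} {h : H} (hcc : CC c) (hhh : HH h)
    (hu : 0 ≤ U c h) (hv : 0 ≤ V h c) :
    (∃ h', (stableMatch CC HH U V).toHome c = some h' ∧ U c h ≤ U c h') ∨
    (∃ c', (stableMatch CC HH U V).toChild h = some c' ∧ V h c ≤ V h c') := by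
  by_cases hcR : c ∈ Rstar CC HH U V h
  · exact Or.inl (Rstar_inv CC HH U V h c hcR)
  · right
    have hmem : c ∈ cand CC HH U V (Rstar CC HH U V) h := by
      simp only [cand, mem_filter, mem_univ, true_and]
      exact ⟨⟨hcc, hhh, hu, hv⟩, hcR⟩
    obtain ⟨b, hb, hbmem, hbmax⟩ := argmaxOpt_of_mem (f := V h) hmem
    exact ⟨b, hb, hbmax c hmem⟩

end Static

end HPDA

namespace HPDA

open scoped Classical

section Dynamic

variable {C H : Type} [Fintype C] [Fintype H]

instance : Inhabited (Matching C H) :=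
  ⟨⟨fun _ => none, fun _ => none, fun c h => by simp⟩⟩

/-- One period of HPDA given the history of earlier matchings. -/
noncomputable def nextM (M : Market C H) (a : Actions H) (prev : ℕ → Matching C H)
    (t : ℕ) : Matching C H :=
  stableMatch
    (fun c => M.arrC c ≤ t ∧ ¬∃ k < t, ∃ h, (prev k).toHome c = some h ∧ a h k = true)
    (fun h => M.arrH h ≤ t ∧ ∀ k < t, (prev k).toChild h = none)
    M.U M.V

theorem nextM_congr {M : Market C H} {a : Actions H} {prev prev' : ℕ → Matching C H} {t : ℕ}
    (hprev : ∀ k < t, prev k = prev' k) : nextM M a prev t = nextM M a prev' t := by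
  unfold nextM
  have h1 : (fun c => M.arrC c ≤ t ∧ ¬∃ k < t, ∃ h, (prev k).toHome c = some h ∧ a h k = true)
      = (fun c => M.arrC c ≤ t ∧ ¬∃ k < t, ∃ h, (prev' k).toHome c = some h ∧ a h k = true) := by
    funext c
    apply propext
    constructor <;> rintro ⟨harr, hnot⟩ <;> refine ⟨harr, fun hex => hnot ?_⟩
    · obtain ⟨k, hk, h, hm, ha⟩ := hex
      exact ⟨k, hk, h, by rw [hprev k hk]; exact hm, ha⟩
    · obtain ⟨k, hk, h, hm, ha⟩ := hex
      exact ⟨k, hk, h, by rw [← hprev k hk]; exact hm, ha⟩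
  have h2 : (fun h => M.arrH h ≤ t ∧ ∀ k < t, (prev k).toChild h = none)
      = (fun h => M.arrH h ≤ t ∧ ∀ k < t, (prev' k).toChild h = none) := by
    funext h
    apply propext
    constructor <;> rintro ⟨harr, hnone⟩ <;>
      exact ⟨harr, fun k hk => by first
        | (rw [← hprev k hk]; exact hnone k hk)
        | (rw [hprev k hk]; exact hnone k hk)⟩
  rw [h1, h2]

/-- The HPDA mechanism. -/
noncomputable def seq (M : Market C H) (a : Actions H) : ℕ → Matching C H
  | t => nextM M a (fun k => if hk : k < t then seq M a k else default) t
termination_by t => t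
decreasing_by exact hk

theorem seq_eq (M : Market C H) (a : Actions H) (t : ℕ) :
    seq M a t = nextM M a (seq M a) t := by
  rw [seq]
  exact nextM_congr fun k hk => dif_pos hk

/-- Homes matched by `seq` at time `t` have never been offered a placement before `t`. -/
def Fresh (M : Market C H) (a : Actions H) (t : ℕ) (h : H) : Prop :=
  M.arrH h ≤ t ∧ ∀ k < t, (seq M a k).toChild h = none

theorem seq_eq' (M : Market C H) (a : Actions H) (t : ℕ) :
    seq M a t = stableMatch (fun c => M.activeC (seq M) a c t) (Fresh M a t) M.U M.V := by
  rw [seq_eq]; rfl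

theorem offered {M : Market C H} {a : Actions H} {t : ℕ} {c : C} {h : H}
    (hm : (seq M a t).toChild h = some c) :
    M.activeC (seq M) a c t ∧ Fresh M a t h ∧ 0 ≤ M.U c h ∧ 0 ≤ M.V h c := by
  rw [seq_eq'] at hm
  exact stableMatch_IR hm

theorem offered' {M : Market C H} {a : Actions H} {t : ℕ} {c : C} {h : H}
    (hm : (seq M a t).toHome c = some h) :
    M.activeC (seq M) a c t ∧ Fresh M a t h ∧ 0 ≤ M.U c h ∧ 0 ≤ M.V h c :=
  offered (((seq M a t).consistent c h).mp hm)

theorem seq_feasible (M : Market C H) : M.feasible (seq M) := by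
  intro a t c h hm
  obtain ⟨hc, hf, _, _⟩ := offered' hm
  exact ⟨hc, hf.1, fun ⟨k, hk, hne, _⟩ => hne (hf.2 k hk)⟩

theorem seq_JEF (M : Market C H) : M.justifiedEnvyFree (seq M) := by
  intro a t c h h' c' hc hh ⟨hU, hV⟩
  obtain ⟨hac, _, hu', hv'⟩ := offered' hc
  obtain ⟨_, hfh, _, hvc'⟩ := offered hh
  have hstab := stableMatch_stable (CC := fun c => M.activeC (seq M) a c t)
    (HH := Fresh M a t) (U := M.U) (V := M.V) hac hfh (le_of_lt (lt_of_le_of_lt hu' hU))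
    (le_of_lt (lt_of_le_of_lt hvc' hV))
  rw [seq_eq'] at hc hh
  rcases hstab with ⟨h₁, hm1, hle1⟩ | ⟨c₁, hm1, hle1⟩
  · rw [hc] at hm1
    cases Option.some.inj hm1
    exact absurd hU (not_lt.mpr hle1)
  · rw [hh] at hm1
    cases Option.some.inj hm1
    exact absurd hV (not_lt.mpr hle1)

theorem seq_IR (M : Market C H) : M.individuallyRational (seq M) := by
  intro a t c h hm
  obtain ⟨_, _, hu, hv⟩ := offered' hm
  exact ⟨hu, hv⟩

theorem seq_cf {M : Market C H} {a : Actions H} {t t' : ℕ} {h : H} {c : C}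
    (hoff : (seq M a t).toChild h = some c) :
    ∀ k ≤ t, seq M (cfProfile a h t') k = seq M a k := by
  have hnone : ∀ j < t, (seq M a j).toChild h = none := (offered hoff).2.1.2
  intro k
  induction k using Nat.strong_induction_on with
  | _ k ih =>
  intro hk
  set a' := cfProfile a h t' with ha'
  have hCC : (fun c => M.activeC (seq M) a' c k) = (fun c => M.activeC (seq M) a c k) := by
    funext c₂
    apply propext
    unfold Market.activeC
    constructor <;> rintro ⟨harr, hnot⟩ <;> refine ⟨harr, fun hex => hnot ?_⟩ <;>
      obtain ⟨j, hj, h₂, hm, hact⟩ := hex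
    · -- hm in `a` world, translate to a' world
      have hjt : j < t := lt_of_lt_of_le hj hk
      have hm' : (seq M a' j).toHome c₂ = some h₂ := by
        rw [ih j hj hjt.le]
        exact hm
      have hne : h₂ ≠ h := by
        intro he; subst he
        exact absurd (((seq M a j).consistent c₂ h₂).mp hm) (by rw [hnone j hjt]; simp)
      refine ⟨j, hj, h₂, hm', ?_⟩
      rw [ha']
      unfold cfProfile
      rw [if_neg hne]
      exact hact
    · have hjt : j < t := lt_of_lt_of_le hj hk
      have hm' : (seq M a j).toHome c₂ = some h₂ := by
        rw [← ih j hj hjt.le]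
        exact hm
      have hne : h₂ ≠ h := by
        intro he; subst he
        exact absurd (((seq M a j).consistent c₂ h₂).mp hm') (by rw [hnone j hjt]; simp)
      refine ⟨j, hj, h₂, hm', ?_⟩
      rw [ha'] at hact
      unfold cfProfile at hact
      rw [if_neg hne] at hact
      exact hact
  have hHH : Fresh M a' k = Fresh M a k := by
    funext h₂
    apply propext
    unfold Fresh
    constructor <;> rintro ⟨harr, hn⟩ <;> refine ⟨harr, fun j hj => ?_⟩
    · rw [← ih j hj (le_trans hj.le hk)]; exact hn j hj
    · rw [ih j hj (le_trans hj.le hk)]; exact hn j hj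
  rw [seq_eq' M a' k, seq_eq' M a k, hCC, hHH]

theorem seq_patienceFree (M : Market C H) : M.patienceFree (seq M) := by
  intro a t h c hc t' ht' c' hc'
  exfalso
  have heq := seq_cf (t' := t') hc t le_rfl
  have hoff' : (seq M (cfProfile a h t') t).toChild h = some c := by rw [heq]; exact hc
  have hfresh := (offered hc').2.1
  have := hfresh.2 t ht'
  rw [hoff'] at this
  simp at this

theorem seq_WNW (M : Market C H) : M.weaklyNonWasteful (seq M) := by
  intro t ⟨c, h, hac, hah, hu, hv, hcn, hhn⟩
  have hfresh : Fresh M (fun _ _ => true) t h := by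
    refine ⟨hah.1, fun k hk => ?_⟩
    by_contra hne
    exact hah.2 ⟨k, hk, hne, rfl⟩
  have hstab := stableMatch_stable (CC := fun c => M.activeC (seq M) (fun _ _ => true) c t)
    (HH := Fresh M (fun _ _ => true) t) (U := M.U) (V := M.V) hac hfresh hu hv
  rw [seq_eq'] at hcn hhn
  rcases hstab with ⟨h₁, hm1, _⟩ | ⟨c₁, hm1, _⟩
  · rw [hcn] at hm1; exact absurd hm1 (by simp)
  · rw [hhn] at hm1; exact absurd hm1 (by simp)

end Dynamic

end HPDA

/-- Corollary 1: a dynamic envy-free and weakly non-wasteful mechanism always exists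
(witnessed by HPDA), for any market with finitely many children and homes, strict
utilities, and positive waiting costs. -/
theorem dynamicEnvyFree_weaklyNonWasteful_exists {C H : Type} [Finite C] [Finite H]
    (M : Market C H) (hwC : 0 < M.wC) (hwH : 0 < M.wH)
    (strictU : ∀ c h h', h ≠ h' → M.U c h ≠ M.U c h')
    (strictV : ∀ h c c', c ≠ c' → M.V h c ≠ M.V h c') :
    ∃ Q : Mechanism C H,
      M.feasible Q ∧ M.dynamicEnvyFree Q ∧ M.weaklyNonWasteful Q := by
  have := Fintype.ofFinite C
  have := Fintype.ofFinite H
  exact ⟨HPDA.seq M, HPDA.seq_feasible M,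
    ⟨HPDA.seq_JEF M, HPDA.seq_patienceFree M, HPDA.seq_IR M⟩, HPDA.seq_WNW M⟩
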